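/- Assume p₁,…,pₙ ∈ D_Δ are distinct, all nonzero, and satisfy the Bethe equations. Fix 1 ≤ x₁ < … < xₙ ≤ N, x₀ = xₙ − N. Then for every non-constant word w ∈ 𝒲 = {L,M}^n (i.e. w ∉ {L⋯L, M⋯M}), Σ_{σ∈S_n} A_σ r_σ(w) Z_σ(w) = 0. -/

import Mathlib

open scoped BigOperators
open Complex

noncomputable section

/-- `S(x,y) = e^{-ix} + e^{iy} - 2*Delta`. -/
def Sfun (Δ x y : ℝ) : ℂ :=
  Complex.exp (-(Complex.I * (x : ℂ))) + Complex.exp (Complex.I * (y : ℂ)) - 2 * (Δ : ℂ)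

/-- `μ`, the unique solution of `cos μ = -Δ` in `[0, π)` when `Δ ∈ [-1, 1)`, and `0` when `Δ < -1`. -/
def muD (Δ : ℝ) : ℝ := if -1 ≤ Δ then Real.arccos (-Δ) else 0

/-- `D_Δ = (-π + μ, π - μ)`. -/
def Ddom (Δ : ℝ) : Set ℝ := Set.Ioo (-Real.pi + muD Δ) (Real.pi - muD Δ)

/-- `L(z) = 1 + c²z/(1-z)`. -/
def Lfun (c : ℝ) (z : ℂ) : ℂ := 1 + (c : ℂ) ^ 2 * z / (1 - z)

/-- `M(z) = 1 - c²/(1-z)`. -/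
def Mfun (c : ℝ) (z : ℂ) : ℂ := 1 - (c : ℂ) ^ 2 / (1 - z)

/-- `z_j = e^{i p_j}`. -/
def zOf {n : ℕ} (p : Fin n → ℝ) : Fin n → ℂ := fun j => Complex.exp (Complex.I * (p j : ℂ))

/-- The coefficient `A_σ`. -/
def Acoef {n : ℕ} (Δ : ℝ) (p : Fin n → ℝ) (σ : Equiv.Perm (Fin n)) : ℂ :=
  ((Equiv.Perm.sign σ : ℤ) : ℂ) *
    ∏ kl ∈ Finset.univ.filter (fun kl : Fin n × Fin n => kl.1 < kl.2),
      Complex.exp (Complex.I * (p (σ kl.1) : ℂ)) * Sfun Δ (p (σ kl.1)) (p (σ kl.2))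

/-- `Z_σ(w)`; the letter `L` is encoded by `true` and the letter `M` by `false`. -/
def Zword {n : ℕ} (x : ℕ → ℤ) (z : Fin n → ℂ) (σ : Equiv.Perm (Fin n))
    (w : Fin n → Bool) : ℂ :=
  ∏ k : Fin n, if w k then z (σ k) ^ (x (k : ℕ)) else z (σ k) ^ (x ((k : ℕ) + 1))

/-- `r_σ(w)`; the letter `L` is encoded by `true` and the letter `M` by `false`;
cyclic successor and predecessor of indices are given by `finRotate`. -/
def rword {n : ℕ} (c : ℝ) (z : Fin n → ℂ) (σ : Equiv.Perm (Fin n))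
    (w : Fin n → Bool) : ℂ :=
  (∏ k : Fin n, if w k = false ∧ w (finRotate n k) = true then
      Mfun c (z (σ k)) * Lfun c (z (σ (finRotate n k))) - 1 else 1) *
  (∏ k : Fin n, if w ((finRotate n).symm k) = true ∧ w k = true then
      Lfun c (z (σ k)) else 1) *
  (∏ k : Fin n, if w k = false ∧ w (finRotate n k) = false then
      Mfun c (z (σ k)) else 1)


/-- Auxiliary: `G i j = z_i * S(p_i, p_j)`. -/
def Gfun {n : ℕ} (Δ : ℝ) (p : Fin n → ℝ) (i j : Fin n) : ℂ :=
  Complex.exp (Complex.I * (p i : ℂ)) * Sfun Δ (p i) (p j)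
open Fin.NatCast in
lemma finRotate_iterate {n : ℕ} (j : Fin (n+1)) (m : ℕ) :
    (finRotate (n+1))^[m] j = j + (m : Fin (n+1)) := by
  induction m with
  | zero => simp
  | succ m ih =>
      rw [Function.iterate_succ_apply', ih, finRotate_succ_apply]
      push_cast
      rw [add_assoc]

open Fin.NatCast in
lemma exists_descent {n : ℕ} (w : Fin n → Bool) (hL : w ≠ fun _ => true)
    (hM : w ≠ fun _ => false) :
    ∃ k, w k = false ∧ w (finRotate n k) = true := by
  by_contra h
  push_neg at h
  obtain ⟨j, hj⟩ : ∃ j, w j = false := by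
    by_contra h2
    push_neg at h2
    exact hL (funext fun j => by simpa using h2 j)
  cases n with
  | zero => exact j.elim0
  | succ n =>
      apply hM
      have hall : ∀ m : ℕ, w ((finRotate (n+1))^[m] j) = false := by
        intro m
        induction m with
        | zero => simpa using hj
        | succ m ih =>
            rw [Function.iterate_succ_apply']
            have := h _ ih
            simpa using this
      funext i
      have := hall ((i - j : Fin (n+1)) : ℕ)
      rwa [finRotate_iterate, Fin.cast_val_eq_self, add_comm, sub_add_cancel] at this
theorem prod_swap_pairs {n : ℕ} (H : Fin n → Fin n → ℂ) (u v : Fin n) :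
    (∏ ab ∈ Finset.univ.filter (fun ab : Fin n × Fin n => ab.1 < ab.2),
        H (Equiv.swap u v ab.1) (Equiv.swap u v ab.2)) *
      ∏ ab ∈ (Finset.univ.filter (fun ab : Fin n × Fin n => ab.1 < ab.2)).filter
          (fun ab => Equiv.swap u v ab.2 < Equiv.swap u v ab.1), H ab.1 ab.2
    = (∏ ab ∈ Finset.univ.filter (fun ab : Fin n × Fin n => ab.1 < ab.2), H ab.1 ab.2) *
      ∏ ab ∈ (Finset.univ.filter (fun ab : Fin n × Fin n => ab.1 < ab.2)).filter
          (fun ab => Equiv.swap u v ab.2 < Equiv.swap u v ab.1), H ab.2 ab.1 := by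
  set τ := Equiv.swap u v with hτ
  set P := Finset.univ.filter (fun ab : Fin n × Fin n => ab.1 < ab.2) with hP
  set E := P.filter (fun ab => τ ab.2 < τ ab.1) with hE
  have hmemP : ∀ ab : Fin n × Fin n, ab ∈ P ↔ ab.1 < ab.2 := by
    intro ab; simp [hP]
  have hinv : ∀ x, τ (τ x) = x := fun x => Equiv.swap_apply_self u v x
  have hsplit : ∀ (F : Fin n × Fin n → ℂ),
      ∏ ab ∈ P, F ab = (∏ ab ∈ E, F ab) * ∏ ab ∈ P.filter (fun ab => ¬ τ ab.2 < τ ab.1), F ab := by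
    intro F
    rw [hE, Finset.prod_filter_mul_prod_filter_not]
  have hcomp : ∀ ab ∈ P.filter (fun ab : Fin n × Fin n => ¬ τ ab.2 < τ ab.1),
      τ ab.1 < τ ab.2 := by
    intro ab hab
    rw [Finset.mem_filter] at hab
    obtain ⟨habP, habn⟩ := hab
    rw [hmemP] at habP
    rcases lt_trichotomy (τ ab.1) (τ ab.2) with h | h | h
    · exact h
    · exact absurd (τ.injective h) (ne_of_lt habP)
    · exact absurd h habn
  have h1 : ∏ ab ∈ P.filter (fun ab => ¬ τ ab.2 < τ ab.1), H (τ ab.1) (τ ab.2)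
      = ∏ ab ∈ P.filter (fun ab => ¬ τ ab.2 < τ ab.1), H ab.1 ab.2 := by
    apply Finset.prod_nbij' (fun ab => (τ ab.1, τ ab.2)) (fun ab => (τ ab.1, τ ab.2))
    · intro ab hab
      have hord := hcomp ab hab
      rw [Finset.mem_filter] at hab ⊢
      rw [hmemP] at hab ⊢
      refine ⟨hord, ?_⟩
      simp only [hinv]
      exact not_lt_of_gt hab.1
    · intro ab hab
      have hord := hcomp ab hab
      rw [Finset.mem_filter] at hab ⊢
      rw [hmemP] at hab ⊢
      refine ⟨hord, ?_⟩
      simp only [hinv]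
      exact not_lt_of_gt hab.1
    · intro ab _; simp [hinv]
    · intro ab _; simp [hinv]
    · intro ab _; rfl
  have h2 : ∏ ab ∈ E, H (τ ab.1) (τ ab.2) = ∏ ab ∈ E, H ab.2 ab.1 := by
    apply Finset.prod_nbij' (fun ab => (τ ab.2, τ ab.1)) (fun ab => (τ ab.2, τ ab.1))
    · intro ab hab
      rw [hE, Finset.mem_filter] at hab ⊢
      rw [hmemP] at hab ⊢
      exact ⟨hab.2, by simpa [hinv] using hab.1⟩
    · intro ab hab
      rw [hE, Finset.mem_filter] at hab ⊢
      rw [hmemP] at hab ⊢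
      exact ⟨hab.2, by simpa [hinv] using hab.1⟩
    · intro ab _; simp [hinv]
    · intro ab _; simp [hinv]
    · intro ab _; rfl
  rw [hsplit (fun ab => H (τ ab.1) (τ ab.2)), hsplit (fun ab => H ab.1 ab.2)]
  rw [h1, h2]
  ring

lemma Acoef_swap {n : ℕ} (Δ : ℝ) (p : Fin n → ℝ) (k k' : Fin n) (h : k ≠ k')
    (σ : Equiv.Perm (Fin n)) :
    Acoef Δ p (σ * Equiv.swap k k') *
        ∏ ab ∈ (Finset.univ.filter (fun ab : Fin n × Fin n => ab.1 < ab.2)).filter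
          (fun ab => Equiv.swap k k' ab.2 < Equiv.swap k k' ab.1),
          Gfun Δ p (σ ab.1) (σ ab.2)
      = -(Acoef Δ p σ *
        ∏ ab ∈ (Finset.univ.filter (fun ab : Fin n × Fin n => ab.1 < ab.2)).filter
          (fun ab => Equiv.swap k k' ab.2 < Equiv.swap k k' ab.1),
          Gfun Δ p (σ ab.2) (σ ab.1)) := by
  have hsgn : ((Equiv.Perm.sign (σ * Equiv.swap k k') : ℤ) : ℂ)
      = -((Equiv.Perm.sign σ : ℤ) : ℂ) := by
    rw [Equiv.Perm.sign_mul, Equiv.Perm.sign_swap h]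
    simp
  have hAeq : ∀ ρ : Equiv.Perm (Fin n), Acoef Δ p ρ =
      ((Equiv.Perm.sign ρ : ℤ) : ℂ) *
        ∏ ab ∈ Finset.univ.filter (fun ab : Fin n × Fin n => ab.1 < ab.2),
          Gfun Δ p (ρ ab.1) (ρ ab.2) := fun ρ => rfl
  have hps := prod_swap_pairs (fun i j => Gfun Δ p (σ i) (σ j)) k k'
  rw [hAeq, hAeq, hsgn]
  simp only [Equiv.Perm.mul_apply]
  calc -((Equiv.Perm.sign σ : ℤ) : ℂ) *
        (∏ ab ∈ Finset.univ.filter (fun ab : Fin n × Fin n => ab.1 < ab.2),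
          Gfun Δ p (σ (Equiv.swap k k' ab.1)) (σ (Equiv.swap k k' ab.2))) *
        ∏ ab ∈ (Finset.univ.filter (fun ab : Fin n × Fin n => ab.1 < ab.2)).filter
          (fun ab => Equiv.swap k k' ab.2 < Equiv.swap k k' ab.1),
          Gfun Δ p (σ ab.1) (σ ab.2)
      = -((Equiv.Perm.sign σ : ℤ) : ℂ) *
        ((∏ ab ∈ Finset.univ.filter (fun ab : Fin n × Fin n => ab.1 < ab.2),
          Gfun Δ p (σ (Equiv.swap k k' ab.1)) (σ (Equiv.swap k k' ab.2))) *
        ∏ ab ∈ (Finset.univ.filter (fun ab : Fin n × Fin n => ab.1 < ab.2)).filter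
          (fun ab => Equiv.swap k k' ab.2 < Equiv.swap k k' ab.1),
          Gfun Δ p (σ ab.1) (σ ab.2)) := by ring
    _ = -((Equiv.Perm.sign σ : ℤ) : ℂ) *
        ((∏ ab ∈ Finset.univ.filter (fun ab : Fin n × Fin n => ab.1 < ab.2),
          Gfun Δ p (σ ab.1) (σ ab.2)) *
        ∏ ab ∈ (Finset.univ.filter (fun ab : Fin n × Fin n => ab.1 < ab.2)).filter
          (fun ab => Equiv.swap k k' ab.2 < Equiv.swap k k' ab.1),
          Gfun Δ p (σ ab.2) (σ ab.1)) := by rw [hps]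
    _ = -(((Equiv.Perm.sign σ : ℤ) : ℂ) *
        (∏ ab ∈ Finset.univ.filter (fun ab : Fin n × Fin n => ab.1 < ab.2),
          Gfun Δ p (σ ab.1) (σ ab.2)) *
        ∏ ab ∈ (Finset.univ.filter (fun ab : Fin n × Fin n => ab.1 < ab.2)).filter
          (fun ab => Equiv.swap k k' ab.2 < Equiv.swap k k' ab.1),
          Gfun Δ p (σ ab.2) (σ ab.1)) := by ring
lemma ML_identity' (c : ℝ) (Δ : ℂ) (hΔ : Δ = (2 - (c:ℂ) ^ 2) / 2) (X Y : ℂ)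
    (hX : 1 - X ≠ 0) (hY : 1 - Y ≠ 0) (hY0 : Y ≠ 0) :
    (Mfun c X * Lfun c Y - 1) * ((1 - X) * (1 - Y))
      = -(c:ℂ) ^ 2 * Y * (Y⁻¹ + X - 2 * Δ) := by
  subst hΔ
  unfold Mfun Lfun
  field_simp
  ring

lemma ML_G {n : ℕ} (c Δ : ℝ) (hΔ : Δ = (2 - c ^ 2) / 2) (p : Fin n → ℝ)
    (a b : Fin n) (ha : 1 - zOf p a ≠ 0) (hb : 1 - zOf p b ≠ 0) :
    (Mfun c (zOf p a) * Lfun c (zOf p b) - 1) * ((1 - zOf p a) * (1 - zOf p b))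
      = -(c:ℂ) ^ 2 * Gfun Δ p b a := by
  have hΔ' : (Δ : ℂ) = (2 - (c:ℂ) ^ 2) / 2 := by rw [hΔ]; push_cast; ring
  have hb0 : zOf p b ≠ 0 := Complex.exp_ne_zero _
  rw [ML_identity' c (Δ:ℂ) hΔ' (zOf p a) (zOf p b) ha hb hb0]
  unfold Gfun Sfun zOf
  rw [Complex.exp_neg]
  ring

lemma rword_swap {n : ℕ} (c Δ : ℝ) (hΔ : Δ = (2 - c ^ 2) / 2) (hc : (c:ℂ) ≠ 0)
    (p : Fin n → ℝ) (h1z : ∀ j, 1 - zOf p j ≠ 0)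
    (w : Fin n → Bool) (k : Fin n) (hwk : w k = false)
    (hwk' : w (finRotate n k) = true) (σ : Equiv.Perm (Fin n)) :
    rword c (zOf p) (σ * Equiv.swap k (finRotate n k)) w
        * Gfun Δ p (σ (finRotate n k)) (σ k)
      = rword c (zOf p) σ w * Gfun Δ p (σ k) (σ (finRotate n k)) := by
  set k' := finRotate n k with hk'def
  set τ := Equiv.swap k k' with hτdef
  set z := zOf p with hzdef
  have hkk' : k ≠ k' := by
    intro h
    rw [← h] at hwk'
    rw [hwk] at hwk'
    exact absurd hwk' (by simp)
  -- step A : the rword values differ only in the ML factor at k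
  have hP2 : (∏ j : Fin n, if w ((finRotate n).symm j) = true ∧ w j = true then
      Lfun c (z ((σ * τ) j)) else 1)
      = ∏ j : Fin n, if w ((finRotate n).symm j) = true ∧ w j = true then
      Lfun c (z (σ j)) else 1 := by
    apply Finset.prod_congr rfl
    intro j _
    by_cases hcond : w ((finRotate n).symm j) = true ∧ w j = true
    · rw [if_pos hcond, if_pos hcond]
      have hj1 : j ≠ k := by rintro rfl; rw [hwk] at hcond; simp at hcond
      have hj2 : j ≠ k' := by
        rintro rfl
        have : (finRotate n).symm k' = k := by
          rw [hk'def]; exact Equiv.symm_apply_apply _ k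
        rw [this, hwk] at hcond
        simp at hcond
      have : (σ * τ) j = σ j := by
        simp [Equiv.Perm.mul_apply, hτdef, Equiv.swap_apply_of_ne_of_ne hj1 hj2]
      rw [this]
    · rw [if_neg hcond, if_neg hcond]
  have hP3 : (∏ j : Fin n, if w j = false ∧ w (finRotate n j) = false then
      Mfun c (z ((σ * τ) j)) else 1)
      = ∏ j : Fin n, if w j = false ∧ w (finRotate n j) = false then
      Mfun c (z (σ j)) else 1 := by
    apply Finset.prod_congr rfl
    intro j _
    by_cases hcond : w j = false ∧ w (finRotate n j) = false
    · rw [if_pos hcond, if_pos hcond]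
      have hj1 : j ≠ k := by
        rintro rfl
        rw [← hk'def, hwk'] at hcond
        simp at hcond
      have hj2 : j ≠ k' := by
        rintro rfl
        rw [hwk'] at hcond
        simp at hcond
      have : (σ * τ) j = σ j := by
        simp [Equiv.Perm.mul_apply, hτdef, Equiv.swap_apply_of_ne_of_ne hj1 hj2]
      rw [this]
    · rw [if_neg hcond, if_neg hcond]
  have hcondk : w k = false ∧ w (finRotate n k) = true := ⟨hwk, hwk'⟩
  have hP1 : ∀ ρ : Equiv.Perm (Fin n),
      (∏ j : Fin n, if w j = false ∧ w (finRotate n j) = true then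
        Mfun c (z (ρ j)) * Lfun c (z (ρ (finRotate n j))) - 1 else 1)
      = (Mfun c (z (ρ k)) * Lfun c (z (ρ k')) - 1) *
        ∏ j ∈ Finset.univ.erase k, (if w j = false ∧ w (finRotate n j) = true then
          Mfun c (z (ρ j)) * Lfun c (z (ρ (finRotate n j))) - 1 else 1) := by
    intro ρ
    rw [← Finset.mul_prod_erase Finset.univ _ (Finset.mem_univ k)]
    rw [if_pos hcondk, ← hk'def]
  have hRest : (∏ j ∈ Finset.univ.erase k, (if w j = false ∧ w (finRotate n j) = true then
          Mfun c (z ((σ * τ) j)) * Lfun c (z ((σ * τ) (finRotate n j))) - 1 else 1))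
      = ∏ j ∈ Finset.univ.erase k, (if w j = false ∧ w (finRotate n j) = true then
          Mfun c (z (σ j)) * Lfun c (z (σ (finRotate n j))) - 1 else 1) := by
    apply Finset.prod_congr rfl
    intro j hj
    have hjk : j ≠ k := (Finset.mem_erase.mp hj).1
    by_cases hcond : w j = false ∧ w (finRotate n j) = true
    · rw [if_pos hcond, if_pos hcond]
      have hj2 : j ≠ k' := by
        rintro rfl
        rw [hwk'] at hcond
        simp at hcond
      have hr1 : finRotate n j ≠ k := by
        intro h
        rw [h, hwk] at hcond
        simp at hcond
      have hr2 : finRotate n j ≠ k' := by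
        rw [hk'def]
        intro h
        exact hjk ((finRotate n).injective h)
      have e1 : (σ * τ) j = σ j := by
        simp [Equiv.Perm.mul_apply, hτdef, Equiv.swap_apply_of_ne_of_ne hjk hj2]
      have e2 : (σ * τ) (finRotate n j) = σ (finRotate n j) := by
        rw [Equiv.Perm.mul_apply, hτdef, Equiv.swap_apply_of_ne_of_ne hr1 hr2]
      rw [e1, e2]
    · rw [if_neg hcond, if_neg hcond]
  have hστk : (σ * τ) k = σ k' := by
    simp [Equiv.Perm.mul_apply, hτdef, Equiv.swap_apply_left]
  have hστk' : (σ * τ) k' = σ k := by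
    simp [Equiv.Perm.mul_apply, hτdef, Equiv.swap_apply_right]
  have stepA : rword c z (σ * τ) w * (Mfun c (z (σ k)) * Lfun c (z (σ k')) - 1)
      = rword c z σ w * (Mfun c (z (σ k')) * Lfun c (z (σ k)) - 1) := by
    unfold rword
    rw [hP1 (σ * τ), hP1 σ, hP2, hP3, hRest, hστk, hστk']
    ring
  -- step B : convert ML factors to Gfun via ML_G
  have hX := ML_G c Δ hΔ p (σ k) (σ k') (h1z _) (h1z _)
  have hY := ML_G c Δ hΔ p (σ k') (σ k) (h1z _) (h1z _)
  have hc2 : -(c:ℂ) ^ 2 ≠ 0 := by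
    simp only [neg_ne_zero]
    exact pow_ne_zero 2 hc
  apply mul_left_cancel₀ hc2
  calc -(c:ℂ) ^ 2 * (rword c z (σ * τ) w * Gfun Δ p (σ k') (σ k))
      = (rword c z (σ * τ) w * (Mfun c (z (σ k)) * Lfun c (z (σ k')) - 1)) *
          ((1 - z (σ k)) * (1 - z (σ k'))) := by
        rw [hzdef]
        linear_combination (-(rword c (zOf p) (σ * τ) w)) * hX
    _ = (rword c z σ w * (Mfun c (z (σ k')) * Lfun c (z (σ k)) - 1)) *
          ((1 - z (σ k)) * (1 - z (σ k'))) := by rw [stepA]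
    _ = -(c:ℂ) ^ 2 * (rword c z σ w * Gfun Δ p (σ k) (σ k')) := by
        rw [hzdef]
        linear_combination (rword c (zOf p) σ w) * hY
lemma Zword_split {n : ℕ} (x : ℕ → ℤ) (z : Fin n → ℂ) (σ : Equiv.Perm (Fin n))
    (w : Fin n → Bool) (k k' : Fin n) (hkk' : k ≠ k') :
    Zword x z σ w =
      (if w k then z (σ k) ^ (x (k : ℕ)) else z (σ k) ^ (x ((k : ℕ) + 1))) *
      ((if w k' then z (σ k') ^ (x (k' : ℕ)) else z (σ k') ^ (x ((k' : ℕ) + 1))) *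
      ∏ j ∈ (Finset.univ.erase k).erase k',
        (if w j then z (σ j) ^ (x (j : ℕ)) else z (σ j) ^ (x ((j : ℕ) + 1)))) := by
  unfold Zword
  rw [← Finset.mul_prod_erase Finset.univ _ (Finset.mem_univ k)]
  rw [← Finset.mul_prod_erase (Finset.univ.erase k) _
    (Finset.mem_erase.mpr ⟨Ne.symm hkk', Finset.mem_univ k'⟩)]

lemma Zword_rest {n : ℕ} (x : ℕ → ℤ) (z : Fin n → ℂ) (σ : Equiv.Perm (Fin n))
    (w : Fin n → Bool) (k k' : Fin n) :
    (∏ j ∈ (Finset.univ.erase k).erase k',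
        (if w j then z ((σ * Equiv.swap k k') j) ^ (x (j : ℕ))
          else z ((σ * Equiv.swap k k') j) ^ (x ((j : ℕ) + 1))))
      = ∏ j ∈ (Finset.univ.erase k).erase k',
        (if w j then z (σ j) ^ (x (j : ℕ)) else z (σ j) ^ (x ((j : ℕ) + 1))) := by
  apply Finset.prod_congr rfl
  intro j hj
  have hj' : j ≠ k' := (Finset.mem_erase.mp hj).1
  have hjk : j ≠ k := (Finset.mem_erase.mp (Finset.mem_erase.mp hj).2).1
  have : (σ * Equiv.swap k k') j = σ j := by
    simp [Equiv.Perm.mul_apply, Equiv.swap_apply_of_ne_of_ne hjk hj']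
  rw [this]

lemma Zword_swap_nonwrap {n : ℕ} (x : ℕ → ℤ) (z : Fin (n+1) → ℂ)
    (w : Fin (n+1) → Bool) (k : Fin (n+1)) (hwk : w k = false)
    (hwk' : w (finRotate (n+1) k) = true) (hk1 : (k : ℕ) + 1 < n + 1)
    (σ : Equiv.Perm (Fin (n+1))) :
    Zword x z (σ * Equiv.swap k (finRotate (n+1) k)) w = Zword x z σ w := by
  set k' := finRotate (n+1) k with hk'def
  have hkk' : k ≠ k' := by
    intro h; rw [← h] at hwk'; rw [hwk] at hwk'; exact absurd hwk' (by simp)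
  have hklast : k ≠ Fin.last n := by
    intro h
    rw [Fin.ext_iff, Fin.val_last] at h
    omega
  have hk'val : (k' : ℕ) = (k : ℕ) + 1 := by
    rw [hk'def, finRotate_succ_apply, Fin.val_add_one, if_neg hklast]
  rw [Zword_split x z (σ * Equiv.swap k k') w k k' hkk',
      Zword_split x z σ w k k' hkk', Zword_rest]
  have e1 : (σ * Equiv.swap k k') k = σ k' := by
    simp [Equiv.Perm.mul_apply, Equiv.swap_apply_left]
  have e2 : (σ * Equiv.swap k k') k' = σ k := by
    simp [Equiv.Perm.mul_apply, Equiv.swap_apply_right]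
  rw [e1, e2, if_neg (by simp [hwk]), if_pos hwk', if_neg (by simp [hwk]),
      if_pos hwk', hk'val]
  ring

lemma Zword_swap_wrap {n : ℕ} (N : ℕ) (x : ℕ → ℤ) (z : Fin (n+1) → ℂ)
    (hz : ∀ j, z j ≠ 0)
    (w : Fin (n+1) → Bool) (k : Fin (n+1)) (hwk : w k = false)
    (hwk' : w (finRotate (n+1) k) = true) (hklast : k = Fin.last n)
    (hx0 : x 0 = x (n+1) - N)
    (σ : Equiv.Perm (Fin (n+1))) :
    Zword x z (σ * Equiv.swap k (finRotate (n+1) k)) w * z (σ k) ^ N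
      = Zword x z σ w * z (σ (finRotate (n+1) k)) ^ N := by
  set k' := finRotate (n+1) k with hk'def
  have hkk' : k ≠ k' := by
    intro h; rw [← h] at hwk'; rw [hwk] at hwk'; exact absurd hwk' (by simp)
  have hk'0 : k' = 0 := by
    rw [hk'def, finRotate_succ_apply, hklast, Fin.last_add_one]
  have hkval : (k : ℕ) = n := by rw [hklast, Fin.val_last]
  have hk'val : (k' : ℕ) = 0 := by rw [hk'0]; rfl
  rw [Zword_split x z (σ * Equiv.swap k k') w k k' hkk',
      Zword_split x z σ w k k' hkk', Zword_rest]
  have e1 : (σ * Equiv.swap k k') k = σ k' := by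
    simp [Equiv.Perm.mul_apply, Equiv.swap_apply_left]
  have e2 : (σ * Equiv.swap k k') k' = σ k := by
    simp [Equiv.Perm.mul_apply, Equiv.swap_apply_right]
  rw [e1, e2, if_neg (by simp [hwk]), if_pos hwk', if_neg (by simp [hwk]),
      if_pos hwk', hk'val, hkval]
  have key : ∀ u : ℂ, u ≠ 0 → u ^ (x 0) * u ^ N = u ^ (x (n+1)) := by
    intro u hu
    rw [← zpow_natCast u N, ← zpow_add₀ hu]
    congr 1
    omega
  have h1 := key (z (σ k)) (hz _)
  have h2 := key (z (σ k')) (hz _)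
  calc z (σ k') ^ x (n + 1) * (z (σ k) ^ x 0 *
        ∏ j ∈ (Finset.univ.erase k).erase k',
          (if w j then z (σ j) ^ (x (j : ℕ)) else z (σ j) ^ (x ((j : ℕ) + 1)))) * z (σ k) ^ N
      = (z (σ k) ^ x 0 * z (σ k) ^ N) * z (σ k') ^ x (n + 1) *
          ∏ j ∈ (Finset.univ.erase k).erase k',
          (if w j then z (σ j) ^ (x (j : ℕ)) else z (σ j) ^ (x ((j : ℕ) + 1))) := by ring
    _ = z (σ k) ^ x (n+1) * z (σ k') ^ x (n + 1) *
          ∏ j ∈ (Finset.univ.erase k).erase k',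
          (if w j then z (σ j) ^ (x (j : ℕ)) else z (σ j) ^ (x ((j : ℕ) + 1))) := by rw [h1]
    _ = z (σ k) ^ x (n+1) * (z (σ k') ^ x 0 * z (σ k') ^ N) *
          ∏ j ∈ (Finset.univ.erase k).erase k',
          (if w j then z (σ j) ^ (x (j : ℕ)) else z (σ j) ^ (x ((j : ℕ) + 1))) := by rw [h2]
    _ = z (σ k) ^ x (n + 1) * (z (σ k') ^ x 0 *
          ∏ j ∈ (Finset.univ.erase k).erase k',
          (if w j then z (σ j) ^ (x (j : ℕ)) else z (σ j) ^ (x ((j : ℕ) + 1)))) * z (σ k') ^ N := by ring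
lemma E_nonwrap {n : ℕ} (k k' : Fin n) (hv : (k' : ℕ) = (k : ℕ) + 1) :
    (Finset.univ.filter (fun ab : Fin n × Fin n => ab.1 < ab.2)).filter
        (fun ab => Equiv.swap k k' ab.2 < Equiv.swap k k' ab.1)
      = {(k, k')} := by
  ext ⟨i, j⟩
  have hi := i.isLt
  have hj := j.isLt
  simp only [Finset.mem_filter, Finset.mem_univ, true_and, Finset.mem_singleton,
    Prod.mk.injEq]
  simp only [Equiv.swap_apply_def]
  constructor
  · rintro ⟨h1, h2⟩
    rw [Fin.lt_def] at h1
    split_ifs at h2 <;> rw [Fin.lt_def] at h2 <;>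
      simp_all [Fin.ext_iff] <;> omega
  · rintro ⟨rfl, rfl⟩
    rw [if_pos rfl, if_neg (by intro h; rw [Fin.ext_iff] at h; omega), if_pos rfl]
    constructor <;> rw [Fin.lt_def] <;> omega
lemma E_wrap_mem {n : ℕ} (k : Fin (n+1)) (hklast : k = Fin.last n) (hk0 : k ≠ 0)
    (ab : Fin (n+1) × Fin (n+1)) :
    (ab ∈ (Finset.univ.filter (fun ab : Fin (n+1) × Fin (n+1) => ab.1 < ab.2)).filter
        (fun ab => Equiv.swap k 0 ab.2 < Equiv.swap k 0 ab.1))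
      ↔ ((ab.1 = 0 ∧ ab.2 ≠ 0) ∨ (ab.1 ≠ 0 ∧ ab.1 ≠ k ∧ ab.2 = k)) := by
  obtain ⟨i, j⟩ := ab
  have hi := i.isLt
  have hj := j.isLt
  have hkv : (k : ℕ) = n := by rw [hklast, Fin.val_last]
  simp only [Finset.mem_filter, Finset.mem_univ, true_and]
  simp only [Equiv.swap_apply_def]
  constructor
  · rintro ⟨h1, h2⟩
    rw [Fin.lt_def] at h1
    split_ifs at h2 <;> rw [Fin.lt_def] at h2 <;>
      simp_all [Fin.ext_iff, -Fin.val_eq_zero_iff] <;> omega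
  · rintro (⟨h1, h2⟩ | ⟨h1, h2, h3⟩)
    · subst h1
      split_ifs <;>
        simp only [Fin.lt_def, Fin.ext_iff, Fin.val_zero, Fin.val_last, ne_eq,
          not_true, not_false_iff] at * <;>
        omega
    · subst h3
      split_ifs <;>
        simp only [Fin.lt_def, Fin.ext_iff, Fin.val_zero, Fin.val_last, ne_eq,
          not_true, not_false_iff] at * <;>
        omega

lemma E_wrap_prod {n : ℕ} (k : Fin (n+1)) (hklast : k = Fin.last n) (hk0 : k ≠ 0)
    (F : Fin (n+1) × Fin (n+1) → ℂ) :
    ∏ ab ∈ (Finset.univ.filter (fun ab : Fin (n+1) × Fin (n+1) => ab.1 < ab.2)).filter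
        (fun ab => Equiv.swap k 0 ab.2 < Equiv.swap k 0 ab.1), F ab
      = (∏ j ∈ Finset.univ.erase 0, F (0, j)) *
        ∏ j ∈ (Finset.univ.erase 0).erase k, F (j, k) := by
  set E := (Finset.univ.filter (fun ab : Fin (n+1) × Fin (n+1) => ab.1 < ab.2)).filter
        (fun ab => Equiv.swap k 0 ab.2 < Equiv.swap k 0 ab.1) with hE
  rw [← Finset.prod_filter_mul_prod_filter_not E (fun ab => ab.1 = 0)]
  congr 1
  · apply Finset.prod_nbij' (fun ab => ab.2) (fun j => ((0 : Fin (n+1)), j))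
    · intro ab hab
      rw [Finset.mem_filter] at hab
      obtain ⟨habE, hab1⟩ := hab
      rw [hE, E_wrap_mem k hklast hk0] at habE
      rcases habE with ⟨h1, h2⟩ | ⟨h1, _, _⟩
      · exact Finset.mem_erase.mpr ⟨h2, Finset.mem_univ _⟩
      · exact absurd hab1 h1
    · intro j hjmem
      rw [Finset.mem_filter]
      refine ⟨?_, rfl⟩
      rw [hE, E_wrap_mem k hklast hk0]
      exact Or.inl ⟨rfl, (Finset.mem_erase.mp hjmem).1⟩
    · intro ab hab
      rw [Finset.mem_filter] at hab
      exact Prod.ext hab.2.symm rfl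
    · intro j _; rfl
    · intro ab hab
      rw [Finset.mem_filter] at hab
      rw [show ab = (ab.1, ab.2) from rfl, hab.2]
  · apply Finset.prod_nbij' (fun ab => ab.1) (fun j => (j, k))
    · intro ab hab
      rw [Finset.mem_filter] at hab
      obtain ⟨habE, hab1⟩ := hab
      rw [hE, E_wrap_mem k hklast hk0] at habE
      rcases habE with ⟨h1, _⟩ | ⟨h1, h2, _⟩
      · exact absurd h1 hab1
      · exact Finset.mem_erase.mpr ⟨h2, Finset.mem_erase.mpr ⟨h1, Finset.mem_univ _⟩⟩
    · intro j hjmem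
      rw [Finset.mem_erase] at hjmem
      obtain ⟨hjk, hj0'⟩ := hjmem
      rw [Finset.mem_filter]
      constructor
      · rw [hE, E_wrap_mem k hklast hk0]
        exact Or.inr ⟨(Finset.mem_erase.mp hj0').1, hjk, rfl⟩
      · exact (Finset.mem_erase.mp hj0').1
    · intro ab hab
      rw [Finset.mem_filter] at hab
      obtain ⟨habE, hab1⟩ := hab
      rw [hE, E_wrap_mem k hklast hk0] at habE
      rcases habE with ⟨h1, _⟩ | ⟨_, _, h3⟩
      · exact absurd h1 hab1
      · exact Prod.ext rfl h3.symm
    · intro j _; rfl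
    · intro ab hab
      rw [Finset.mem_filter] at hab
      obtain ⟨habE, hab1⟩ := hab
      rw [hE, E_wrap_mem k hklast hk0] at habE
      rcases habE with ⟨h1, _⟩ | ⟨_, _, h3⟩
      · exact absurd h1 hab1
      · rw [show ab = (ab.1, ab.2) from rfl, h3]
lemma BE_prod {n : ℕ} (N : ℕ) (Δ : ℝ) (Θ : ℝ → ℝ → ℝ) (p : Fin n → ℝ)
    (hΘp : ∀ i j : Fin n, Complex.exp (-(Complex.I * (Θ (p i) (p j) : ℂ))) =
      Complex.exp (Complex.I * ((p i : ℂ) - (p j : ℂ))) * Sfun Δ (p i) (p j) / Sfun Δ (p j) (p i))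
    (hS : ∀ i j, Sfun Δ (p i) (p j) ≠ 0)
    (hBE : ∀ j, Complex.exp (Complex.I * (N : ℂ) * (p j : ℂ)) =
      (-1 : ℂ) ^ (n - 1) *
        Complex.exp (-(Complex.I * ((∑ k, Θ (p j) (p k) : ℝ) : ℂ))))
    (j : Fin n) :
    (zOf p j) ^ N * ∏ m, Gfun Δ p m j = (-1 : ℂ) ^ (n - 1) * ∏ m, Gfun Δ p j m := by
  have hzpow : (zOf p j) ^ N = Complex.exp (Complex.I * (N : ℂ) * (p j : ℂ)) := by
    unfold zOf
    rw [← Complex.exp_nat_mul]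
    congr 1
    ring
  rw [hzpow, hBE j]
  have hsum : -(Complex.I * ((∑ k, Θ (p j) (p k) : ℝ) : ℂ))
      = ∑ m, -(Complex.I * (Θ (p j) (p m) : ℂ)) := by
    push_cast
    rw [Finset.mul_sum]
    exact (Finset.sum_neg_distrib _).symm
  rw [hsum, Complex.exp_sum]
  rw [mul_assoc, ← Finset.prod_mul_distrib]
  congr 1
  apply Finset.prod_congr rfl
  intro m _
  rw [hΘp j m]
  have hexp : Complex.exp (Complex.I * ((p j : ℂ) - (p m : ℂ)))
      = Complex.exp (Complex.I * (p j : ℂ)) / Complex.exp (Complex.I * (p m : ℂ)) := by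
    rw [← Complex.exp_sub]
    congr 1
    ring
  rw [hexp]
  unfold Gfun
  have h1 : Complex.exp (Complex.I * (p m : ℂ)) ≠ 0 := Complex.exp_ne_zero _
  have h2 := hS m j
  field_simp

/-- **Cancellation for non-constant words (Lemma 3.6).** -/
theorem sum_nonconstant_word_eq_zero
    (N n : ℕ) (hN : 0 < N)
    (c : ℝ) (hc : 0 < c) (Δ : ℝ) (hΔ : Δ = (2 - c ^ 2) / 2)
    (Θ : ℝ → ℝ → ℝ)
    (hΘcont : ContinuousOn (fun q : ℝ × ℝ => Θ q.1 q.2) (Ddom Δ ×ˢ Ddom Δ))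
    (hΘzero : Θ 0 0 = 0)
    (hΘ : ∀ a ∈ Ddom Δ, ∀ b ∈ Ddom Δ,
      Complex.exp (-(Complex.I * (Θ a b : ℂ))) =
        Complex.exp (Complex.I * ((a : ℂ) - (b : ℂ))) * Sfun Δ a b / Sfun Δ b a)
    (p : Fin n → ℝ) (hpD : ∀ j, p j ∈ Ddom Δ)
    (hdistinct : Function.Injective p)
    (hnonzero : ∀ j, p j ≠ 0)
    (hBE : ∀ j, Complex.exp (Complex.I * (N : ℂ) * (p j : ℂ)) =
      (-1 : ℂ) ^ (n - 1) *
        Complex.exp (-(Complex.I * ((∑ k, Θ (p j) (p k) : ℝ) : ℂ))))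
    (x : ℕ → ℤ) (hx0 : x 0 = x n - N)
    (hxmono : ∀ i j, i < j → j ≤ n → x i < x j)
    (hx1 : 1 ≤ x 1) (hxN : x n ≤ (N : ℤ))
    (w : Fin n → Bool)
    (hwL : w ≠ fun _ => true) (hwM : w ≠ fun _ => false) :
    ∑ σ : Equiv.Perm (Fin n),
        Acoef Δ p σ * (rword c (zOf p) σ w * Zword x (zOf p) σ w) = 0 := by
  cases n with
  | zero =>
      exact absurd (funext fun j => j.elim0) hwL
  | succ n =>
  -- basic nonvanishing facts
  have hcne : (c : ℂ) ≠ 0 := Complex.ofReal_ne_zero.mpr (ne_of_gt hc)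
  have hS : ∀ i j, Sfun Δ (p i) (p j) ≠ 0 := by
    intro i j h
    have h2 := hΘ (p j) (hpD j) (p i) (hpD i)
    rw [h, div_zero] at h2
    exact Complex.exp_ne_zero _ h2
  have hG : ∀ i j, Gfun Δ p i j ≠ 0 := fun i j =>
    mul_ne_zero (Complex.exp_ne_zero _) (hS i j)
  have hz : ∀ j, zOf p j ≠ 0 := fun j => Complex.exp_ne_zero _
  have hmu : 0 ≤ muD Δ := by
    unfold muD
    split_ifs
    · exact Real.arccos_nonneg _
    · exact le_refl 0
  have h1z : ∀ j, 1 - zOf p j ≠ 0 := by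
    intro j h
    have hz1 : Complex.exp (Complex.I * (p j : ℂ)) = 1 := (sub_eq_zero.mp h).symm
    rw [Complex.exp_eq_one_iff] at hz1
    obtain ⟨m, hm⟩ := hz1
    have hpc : (p j : ℂ) = ((2 * Real.pi * m : ℝ) : ℂ) := by
      apply mul_left_cancel₀ Complex.I_ne_zero
      rw [hm]
      push_cast
      ring
    have hreal : p j = 2 * Real.pi * m := by exact_mod_cast hpc
    obtain ⟨hl, hr⟩ := hpD j
    have hπ := Real.pi_pos
    have hb1 : -Real.pi < p j := by linarith
    have hb2 : p j < Real.pi := by linarith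
    have hm1 : (m : ℝ) < 1 := by nlinarith
    have hm2 : (-1 : ℝ) < m := by nlinarith
    have hmi1 : m < 1 := by exact_mod_cast hm1
    have hmi2 : -1 < m := by exact_mod_cast hm2
    have : m = 0 := by omega
    rw [this] at hreal
    simp at hreal
    exact hnonzero j hreal
  have hΘp : ∀ i j : Fin (n+1), Complex.exp (-(Complex.I * (Θ (p i) (p j) : ℂ))) =
      Complex.exp (Complex.I * ((p i : ℂ) - (p j : ℂ))) * Sfun Δ (p i) (p j) /
        Sfun Δ (p j) (p i) := fun i j => hΘ (p i) (hpD i) (p j) (hpD j)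
  -- the descent position
  obtain ⟨k, hwk, hwk'R⟩ := exists_descent w hwL hwM
  have hkk' : k ≠ finRotate (n+1) k := by
    intro h
    rw [← h, hwk] at hwk'R
    exact absurd hwk'R (by simp)
  -- the key involution identity
  have key : ∀ σ : Equiv.Perm (Fin (n+1)),
      Acoef Δ p (σ * Equiv.swap k (finRotate (n+1) k)) *
        (rword c (zOf p) (σ * Equiv.swap k (finRotate (n+1) k)) w *
          Zword x (zOf p) (σ * Equiv.swap k (finRotate (n+1) k)) w)
      = -(Acoef Δ p σ * (rword c (zOf p) σ w * Zword x (zOf p) σ w)) := by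
    intro σ
    have hr := rword_swap c Δ hΔ hcne p h1z w k hwk hwk'R σ
    rcases Nat.lt_or_ge ((k : ℕ) + 1) (n + 1) with hk1 | hk1
    · -- non-wrap case
      have hklast : k ≠ Fin.last n := by
        intro h
        rw [Fin.ext_iff, Fin.val_last] at h
        omega
      have hk'val : ((finRotate (n+1) k : Fin (n+1)) : ℕ) = (k : ℕ) + 1 := by
        rw [finRotate_succ_apply, Fin.val_add_one, if_neg hklast]
      have hA := Acoef_swap Δ p k (finRotate (n+1) k) hkk' σ
      rw [E_nonwrap k (finRotate (n+1) k) hk'val] at hA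
      simp only [Finset.prod_singleton] at hA
      have hZ := Zword_swap_nonwrap x (zOf p) w k hwk hwk'R hk1 σ
      apply mul_right_cancel₀
        (mul_ne_zero (hG (σ k) (σ (finRotate (n+1) k))) (hG (σ (finRotate (n+1) k)) (σ k)))
      calc Acoef Δ p (σ * Equiv.swap k (finRotate (n+1) k)) *
            (rword c (zOf p) (σ * Equiv.swap k (finRotate (n+1) k)) w *
              Zword x (zOf p) (σ * Equiv.swap k (finRotate (n+1) k)) w) *
            (Gfun Δ p (σ k) (σ (finRotate (n+1) k)) * Gfun Δ p (σ (finRotate (n+1) k)) (σ k))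
          = (Acoef Δ p (σ * Equiv.swap k (finRotate (n+1) k)) *
              Gfun Δ p (σ k) (σ (finRotate (n+1) k))) *
            ((rword c (zOf p) (σ * Equiv.swap k (finRotate (n+1) k)) w *
              Gfun Δ p (σ (finRotate (n+1) k)) (σ k)) *
              Zword x (zOf p) (σ * Equiv.swap k (finRotate (n+1) k)) w) := by ring
        _ = (-(Acoef Δ p σ * Gfun Δ p (σ (finRotate (n+1) k)) (σ k))) *
            ((rword c (zOf p) σ w * Gfun Δ p (σ k) (σ (finRotate (n+1) k))) *
              Zword x (zOf p) σ w) := by rw [hA, hr, hZ]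
        _ = -(Acoef Δ p σ * (rword c (zOf p) σ w * Zword x (zOf p) σ w)) *
            (Gfun Δ p (σ k) (σ (finRotate (n+1) k)) * Gfun Δ p (σ (finRotate (n+1) k)) (σ k)) := by
            ring
    · -- wrap case
      have hklast : k = Fin.last n := by
        have := k.isLt
        rw [Fin.ext_iff, Fin.val_last]
        omega
      have hk'0 : finRotate (n+1) k = 0 := by
        rw [hklast, finRotate_succ_apply, Fin.last_add_one]
      have hZ := Zword_swap_wrap N x (zOf p) hz w k hwk hwk'R hklast hx0 σ
      have hA := Acoef_swap Δ p k (finRotate (n+1) k) hkk' σ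
      rw [hk'0] at hr hZ hA hkk' ⊢
      rw [E_wrap_prod k hklast hkk' (fun ab => Gfun Δ p (σ ab.1) (σ ab.2)),
          E_wrap_prod k hklast hkk' (fun ab => Gfun Δ p (σ ab.2) (σ ab.1))] at hA
      simp only at hA
      -- full-product completions
      have c1 : Gfun Δ p (σ 0) (σ 0) *
          ∏ j ∈ Finset.univ.erase 0, Gfun Δ p (σ 0) (σ j)
          = ∏ m, Gfun Δ p (σ 0) m := by
        rw [← Equiv.prod_comp σ (fun m => Gfun Δ p (σ 0) m)]
        exact Finset.mul_prod_erase Finset.univ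
          (fun m => Gfun Δ p (σ 0) (σ m)) (Finset.mem_univ 0)
      have c2 : Gfun Δ p (σ 0) (σ k) * (Gfun Δ p (σ k) (σ k) *
          ∏ j ∈ (Finset.univ.erase 0).erase k, Gfun Δ p (σ j) (σ k))
          = ∏ m, Gfun Δ p m (σ k) := by
        rw [← Equiv.prod_comp σ (fun m => Gfun Δ p m (σ k))]
        rw [← Finset.mul_prod_erase Finset.univ
          (fun m => Gfun Δ p (σ m) (σ k)) (Finset.mem_univ 0)]
        congr 1
        exact Finset.mul_prod_erase (Finset.univ.erase 0)
          (fun m => Gfun Δ p (σ m) (σ k))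
          (Finset.mem_erase.mpr ⟨hkk', Finset.mem_univ k⟩)
      have c3 : Gfun Δ p (σ 0) (σ 0) *
          ∏ j ∈ Finset.univ.erase 0, Gfun Δ p (σ j) (σ 0)
          = ∏ m, Gfun Δ p m (σ 0) := by
        rw [← Equiv.prod_comp σ (fun m => Gfun Δ p m (σ 0))]
        exact Finset.mul_prod_erase Finset.univ
          (fun m => Gfun Δ p (σ m) (σ 0)) (Finset.mem_univ 0)
      have c4 : Gfun Δ p (σ k) (σ 0) * (Gfun Δ p (σ k) (σ k) *
          ∏ j ∈ (Finset.univ.erase 0).erase k, Gfun Δ p (σ k) (σ j))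
          = ∏ m, Gfun Δ p (σ k) m := by
        rw [← Equiv.prod_comp σ (fun m => Gfun Δ p (σ k) m)]
        rw [← Finset.mul_prod_erase Finset.univ
          (fun m => Gfun Δ p (σ k) (σ m)) (Finset.mem_univ 0)]
        congr 1
        exact Finset.mul_prod_erase (Finset.univ.erase 0)
          (fun m => Gfun Δ p (σ k) (σ m))
          (Finset.mem_erase.mpr ⟨hkk', Finset.mem_univ k⟩)
      have b1 := BE_prod N Δ Θ p hΘp hS hBE (σ k)
      have b2 := BE_prod N Δ Θ p hΘp hS hBE (σ 0)
      -- the Bethe-equation balance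
      have d1 : zOf p (σ k) ^ N * ((∏ m, Gfun Δ p (σ 0) m) * (∏ m, Gfun Δ p m (σ k)))
          = zOf p (σ 0) ^ N * ((∏ m, Gfun Δ p m (σ 0)) * (∏ m, Gfun Δ p (σ k) m)) := by
        calc zOf p (σ k) ^ N * ((∏ m, Gfun Δ p (σ 0) m) * (∏ m, Gfun Δ p m (σ k)))
            = (∏ m, Gfun Δ p (σ 0) m) * (zOf p (σ k) ^ N * ∏ m, Gfun Δ p m (σ k)) := by ring
          _ = (∏ m, Gfun Δ p (σ 0) m) * ((-1 : ℂ) ^ (n + 1 - 1) * ∏ m, Gfun Δ p (σ k) m) := by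
              rw [b1]
          _ = ((-1 : ℂ) ^ (n + 1 - 1) * ∏ m, Gfun Δ p (σ 0) m) * ∏ m, Gfun Δ p (σ k) m := by
              ring
          _ = (zOf p (σ 0) ^ N * ∏ m, Gfun Δ p m (σ 0)) * ∏ m, Gfun Δ p (σ k) m := by
              rw [← b2]
          _ = zOf p (σ 0) ^ N * ((∏ m, Gfun Δ p m (σ 0)) * (∏ m, Gfun Δ p (σ k) m)) := by ring
      have h4 : zOf p (σ k) ^ N *
          (((∏ j ∈ Finset.univ.erase 0, Gfun Δ p (σ 0) (σ j)) *
            ∏ j ∈ (Finset.univ.erase 0).erase k, Gfun Δ p (σ j) (σ k)) *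
            Gfun Δ p (σ 0) (σ k))
          = zOf p (σ 0) ^ N *
          (((∏ j ∈ Finset.univ.erase 0, Gfun Δ p (σ j) (σ 0)) *
            ∏ j ∈ (Finset.univ.erase 0).erase k, Gfun Δ p (σ k) (σ j)) *
            Gfun Δ p (σ k) (σ 0)) := by
        apply mul_left_cancel₀
          (mul_ne_zero (hG (σ 0) (σ 0)) (hG (σ k) (σ k)))
        calc (Gfun Δ p (σ 0) (σ 0) * Gfun Δ p (σ k) (σ k)) * (zOf p (σ k) ^ N *
              (((∏ j ∈ Finset.univ.erase 0, Gfun Δ p (σ 0) (σ j)) *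
                ∏ j ∈ (Finset.univ.erase 0).erase k, Gfun Δ p (σ j) (σ k)) *
                Gfun Δ p (σ 0) (σ k)))
            = zOf p (σ k) ^ N *
              ((Gfun Δ p (σ 0) (σ 0) * ∏ j ∈ Finset.univ.erase 0, Gfun Δ p (σ 0) (σ j)) *
               (Gfun Δ p (σ 0) (σ k) * (Gfun Δ p (σ k) (σ k) *
                 ∏ j ∈ (Finset.univ.erase 0).erase k, Gfun Δ p (σ j) (σ k)))) := by ring
          _ = zOf p (σ k) ^ N * ((∏ m, Gfun Δ p (σ 0) m) * (∏ m, Gfun Δ p m (σ k))) := by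
              rw [c1, c2]
          _ = zOf p (σ 0) ^ N * ((∏ m, Gfun Δ p m (σ 0)) * (∏ m, Gfun Δ p (σ k) m)) := d1
          _ = zOf p (σ 0) ^ N *
              ((Gfun Δ p (σ 0) (σ 0) * ∏ j ∈ Finset.univ.erase 0, Gfun Δ p (σ j) (σ 0)) *
               (Gfun Δ p (σ k) (σ 0) * (Gfun Δ p (σ k) (σ k) *
                 ∏ j ∈ (Finset.univ.erase 0).erase k, Gfun Δ p (σ k) (σ j)))) := by
              rw [c3, c4]
          _ = (Gfun Δ p (σ 0) (σ 0) * Gfun Δ p (σ k) (σ k)) * (zOf p (σ 0) ^ N *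
              (((∏ j ∈ Finset.univ.erase 0, Gfun Δ p (σ j) (σ 0)) *
                ∏ j ∈ (Finset.univ.erase 0).erase k, Gfun Δ p (σ k) (σ j)) *
                Gfun Δ p (σ k) (σ 0))) := by ring
      have hEane : ((∏ j ∈ Finset.univ.erase 0, Gfun Δ p (σ 0) (σ j)) *
            ∏ j ∈ (Finset.univ.erase 0).erase k, Gfun Δ p (σ j) (σ k)) ≠ 0 :=
        mul_ne_zero
          (Finset.prod_ne_zero_iff.mpr (fun j _ => hG _ _))
          (Finset.prod_ne_zero_iff.mpr (fun j _ => hG _ _))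
      apply mul_right_cancel₀ (mul_ne_zero hEane
        (mul_ne_zero (hG (σ 0) (σ k)) (pow_ne_zero N (hz (σ k)))))
      calc Acoef Δ p (σ * Equiv.swap k 0) *
            (rword c (zOf p) (σ * Equiv.swap k 0) w * Zword x (zOf p) (σ * Equiv.swap k 0) w) *
            (((∏ j ∈ Finset.univ.erase 0, Gfun Δ p (σ 0) (σ j)) *
              ∏ j ∈ (Finset.univ.erase 0).erase k, Gfun Δ p (σ j) (σ k)) *
              (Gfun Δ p (σ 0) (σ k) * zOf p (σ k) ^ N))
          = (Acoef Δ p (σ * Equiv.swap k 0) *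
              ((∏ j ∈ Finset.univ.erase 0, Gfun Δ p (σ 0) (σ j)) *
              ∏ j ∈ (Finset.univ.erase 0).erase k, Gfun Δ p (σ j) (σ k))) *
            ((rword c (zOf p) (σ * Equiv.swap k 0) w * Gfun Δ p (σ 0) (σ k)) *
              (Zword x (zOf p) (σ * Equiv.swap k 0) w * zOf p (σ k) ^ N)) := by ring
        _ = (-(Acoef Δ p σ *
              ((∏ j ∈ Finset.univ.erase 0, Gfun Δ p (σ j) (σ 0)) *
              ∏ j ∈ (Finset.univ.erase 0).erase k, Gfun Δ p (σ k) (σ j)))) *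
            ((rword c (zOf p) σ w * Gfun Δ p (σ k) (σ 0)) *
              (Zword x (zOf p) σ w * zOf p (σ 0) ^ N)) := by rw [hA, hr, hZ]
        _ = -(Acoef Δ p σ * (rword c (zOf p) σ w * Zword x (zOf p) σ w)) *
            (zOf p (σ 0) ^ N *
              (((∏ j ∈ Finset.univ.erase 0, Gfun Δ p (σ j) (σ 0)) *
              ∏ j ∈ (Finset.univ.erase 0).erase k, Gfun Δ p (σ k) (σ j)) *
              Gfun Δ p (σ k) (σ 0))) := by ring
        _ = -(Acoef Δ p σ * (rword c (zOf p) σ w * Zword x (zOf p) σ w)) *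
            (zOf p (σ k) ^ N *
              (((∏ j ∈ Finset.univ.erase 0, Gfun Δ p (σ 0) (σ j)) *
              ∏ j ∈ (Finset.univ.erase 0).erase k, Gfun Δ p (σ j) (σ k)) *
              Gfun Δ p (σ 0) (σ k))) := by rw [h4]
        _ = -(Acoef Δ p σ * (rword c (zOf p) σ w * Zword x (zOf p) σ w)) *
            (((∏ j ∈ Finset.univ.erase 0, Gfun Δ p (σ 0) (σ j)) *
              ∏ j ∈ (Finset.univ.erase 0).erase k, Gfun Δ p (σ j) (σ k)) *
              (Gfun Δ p (σ 0) (σ k) * zOf p (σ k) ^ N)) := by ring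
  -- sum over the involution
  have hsum : (∑ σ : Equiv.Perm (Fin (n+1)),
        Acoef Δ p σ * (rword c (zOf p) σ w * Zword x (zOf p) σ w))
      = -(∑ σ : Equiv.Perm (Fin (n+1)),
        Acoef Δ p σ * (rword c (zOf p) σ w * Zword x (zOf p) σ w)) := by
    calc (∑ σ : Equiv.Perm (Fin (n+1)),
          Acoef Δ p σ * (rword c (zOf p) σ w * Zword x (zOf p) σ w))
        = ∑ σ : Equiv.Perm (Fin (n+1)),
          Acoef Δ p (σ * Equiv.swap k (finRotate (n+1) k)) *
            (rword c (zOf p) (σ * Equiv.swap k (finRotate (n+1) k)) w *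
              Zword x (zOf p) (σ * Equiv.swap k (finRotate (n+1) k)) w) :=
          (Fintype.sum_equiv (Equiv.mulRight (Equiv.swap k (finRotate (n+1) k)))
            (fun σ => Acoef Δ p (σ * Equiv.swap k (finRotate (n+1) k)) *
              (rword c (zOf p) (σ * Equiv.swap k (finRotate (n+1) k)) w *
                Zword x (zOf p) (σ * Equiv.swap k (finRotate (n+1) k)) w))
            (fun σ => Acoef Δ p σ * (rword c (zOf p) σ w * Zword x (zOf p) σ w))
            (fun σ => rfl)).symm
      _ = ∑ σ : Equiv.Perm (Fin (n+1)),
          -(Acoef Δ p σ * (rword c (zOf p) σ w * Zword x (zOf p) σ w)) :=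
          Finset.sum_congr rfl (fun σ _ => key σ)
      _ = -(∑ σ : Equiv.Perm (Fin (n+1)),
          Acoef Δ p σ * (rword c (zOf p) σ w * Zword x (zOf p) σ w)) :=
          Finset.sum_neg_distrib _
  linear_combination hsum / 2
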